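/- Let μ and ν be probability measures on ℝ with all moments finite. Let (m_n)_{n≥0} be the sequence m_n = (\hat{μ}⋆\hat{ν})((X′)^n) (so m_0 = 1), and let (b_n)_{n≥1} be its boolean cumulants. Then for every n ≥ 1, b_n equals the sum of the n-th boolean cumulant of the moment sequence (μ_k)_{k≥0} of μ and the n-th boolean cumulant of the moment sequence (ν_k)_{k≥0} of ν; i.e., the moments of the filtered convolution restricted to powers of X′ are the moments of the boolean convolution μ⊎ν. -/

import Mathlib

open scoped TensorProduct

/-- The two-letter alphabet `{z, w}`. -/
inductive Letter | z | w
deriving DecidableEq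

/-- Words: elements of the free monoid `S = FS({z,w})`. -/
abbrev Word := List Letter

/-- The three generators `X, X', P` of the algebra `B`. -/
inductive Gen | X | X' | P
deriving DecidableEq, BEq

/-- The free unital associative `ℂ`-algebra on the generators `X, X', P`. -/
abbrev B := FreeAlgebra ℂ Gen

/-- `X(z) = X`, `X(w) = X'`. -/
noncomputable def Xletter (l : Letter) : B :=
  FreeAlgebra.ι ℂ (match l with | .z => Gen.X | .w => Gen.X')

/-- `X(t) = X(t₁) ⋯ X(t_r)` for a word `t ∈ S`. -/
noncomputable def Xword (t : Word) : B := (t.map Xletter).prod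

/-- The projection generator `P`. -/
noncomputable def Pgen : B := FreeAlgebra.ι ℂ Gen.P

/-- Value of the functional `\hat μ` (built from the moment sequence `m`, `m 0 = 1`)
on a basis word of `B`: split the word into maximal `P`-free blocks and take the
product of `m (length of block)`. -/
def wordVal (m : ℕ → ℂ) (l : List Gen) : ℂ :=
  ((l.splitOn Gen.P).map (fun t => if t = [] then 1 else m t.length)).prod

/-- The linear functional `\hat μ : B → ℂ` associated with a moment sequence `m`. -/
noncomputable def hatL (m : ℕ → ℂ) : B →ₗ[ℂ] ℂ :=
  (Finsupp.linearCombination ℂ (fun x : FreeMonoid Gen => wordVal m (FreeMonoid.toList x))).comp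
    ((MonoidAlgebra.coeffLinearEquiv ℂ : MonoidAlgebra ℂ (FreeMonoid Gen) ≃ₗ[ℂ] (FreeMonoid Gen →₀ ℂ)).toLinearMap.comp
    (FreeAlgebra.equivMonoidAlgebraFreeMonoid : B ≃ₐ[ℂ] MonoidAlgebra ℂ (FreeMonoid Gen)).toLinearMap)

/-- The coproduct `Δ : B → B ⊗ B`, `Δ X = X⊗1 + 1⊗X`, `Δ X' = X'⊗P + P⊗X'`, `Δ P = P⊗P`. -/
noncomputable def Cop : B →ₐ[ℂ] B ⊗[ℂ] B :=
  FreeAlgebra.lift ℂ (fun g : Gen => match g with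
    | .X => FreeAlgebra.ι ℂ Gen.X ⊗ₜ[ℂ] 1 + 1 ⊗ₜ[ℂ] FreeAlgebra.ι ℂ Gen.X
    | .X' => FreeAlgebra.ι ℂ Gen.X' ⊗ₜ[ℂ] Pgen + Pgen ⊗ₜ[ℂ] FreeAlgebra.ι ℂ Gen.X'
    | .P => Pgen ⊗ₜ[ℂ] Pgen)

/-- The functional `φ ⊗ ψ` on `B ⊗ B`. -/
noncomputable def tensorFunc (φ ψ : B →ₗ[ℂ] ℂ) : B ⊗[ℂ] B →ₗ[ℂ] ℂ :=
  (LinearMap.mul' ℂ ℂ).comp (TensorProduct.map φ ψ)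

/-- The filtered convolution `φ ⋆ ψ = (φ ⊗ ψ) ∘ Δ`. -/
noncomputable def filtConv (φ ψ : B →ₗ[ℂ] ℂ) : B →ₗ[ℂ] ℂ :=
  (tensorFunc φ ψ).comp Cop.toLinearMap

/-- The `n`-th moment of a measure on `ℝ`, as a complex number. -/
noncomputable def mom (μ : MeasureTheory.Measure ℝ) (n : ℕ) : ℂ :=
  ((∫ x, x ^ n ∂μ : ℝ) : ℂ)


/-- `b` is the sequence of boolean cumulants of the sequence `m` (with `m 0 = 1`):
`m n = Σ_{k=1}^{n} b k * m (n-k)` for `n ≥ 1`. -/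
def IsBooleanCumulants (m b : ℕ → ℂ) : Prop :=
  ∀ n : ℕ, 1 ≤ n → m n = ∑ k ∈ Finset.Icc 1 n, b k * m (n - k)

lemma equiv_prod (l : List Gen) :
    (FreeAlgebra.equivMonoidAlgebraFreeMonoid (R := ℂ) (X := Gen))
      ((l.map (FreeAlgebra.ι ℂ)).prod)
      = MonoidAlgebra.single (FreeMonoid.ofList l) 1 := by
  induction l with
  | nil => simp [MonoidAlgebra.one_def]
  | cons g t ih =>
    simp only [List.map_cons, List.prod_cons, map_mul, ih]
    rw [show (FreeAlgebra.equivMonoidAlgebraFreeMonoid (R := ℂ) (X := Gen)) (FreeAlgebra.ι ℂ g)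
        = MonoidAlgebra.single (FreeMonoid.of g) 1 by
      simp [FreeAlgebra.equivMonoidAlgebraFreeMonoid, FreeAlgebra.lift_ι_apply,
        MonoidAlgebra.of_apply]]
    rw [MonoidAlgebra.single_mul_single]
    simp [FreeMonoid.ofList_cons]

lemma hatL_apply (m : ℕ → ℂ) (x : B) :
    hatL m x = (Finsupp.linearCombination ℂ (fun x : FreeMonoid Gen => wordVal m (FreeMonoid.toList x)))
      (MonoidAlgebra.coeffLinearEquiv ℂ (FreeAlgebra.equivMonoidAlgebraFreeMonoid x)) := rfl

lemma hatL_prod (m : ℕ → ℂ) (l : List Gen) :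
    hatL m ((l.map (FreeAlgebra.ι ℂ)).prod) = wordVal m l := by
  rw [hatL_apply, equiv_prod l]
  rw [show MonoidAlgebra.coeffLinearEquiv ℂ (MonoidAlgebra.single (FreeMonoid.ofList l) (1:ℂ))
      = Finsupp.single (FreeMonoid.ofList l) (1:ℂ) from rfl]
  rw [Finsupp.linearCombination_single, one_smul]
  rfl

lemma tensorFunc_tmul (φ ψ : B →ₗ[ℂ] ℂ) (x y : B) :
    tensorFunc φ ψ (x ⊗ₜ[ℂ] y) = φ x * ψ y := by
  simp [tensorFunc, LinearMap.mul'_apply]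

lemma prod_tmul_list (l : List (B × B)) :
    (l.map fun p => p.1 ⊗ₜ[ℂ] p.2).prod
      = ((l.map Prod.fst).prod) ⊗ₜ[ℂ] ((l.map Prod.snd).prod) := by
  induction l with
  | nil => simp [Algebra.TensorProduct.one_def]
  | cons p t ih => simp [ih, Algebra.TensorProduct.tmul_mul_tmul]

lemma add_pow_eq_sum_bool {R : Type*} [Semiring R] (a b : R) (n : ℕ) :
    (a + b) ^ n = ∑ f : Fin n → Bool, (List.ofFn (fun i => if f i then a else b)).prod := by
  induction n with
  | zero => simp
  | succ n ih =>
    rw [pow_succ', ih, Finset.mul_sum]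
    rw [← Equiv.sum_comp (Fin.consEquiv (fun _ : Fin (n+1) => Bool))
      (fun f => (List.ofFn (fun i => if f i then a else b)).prod)]
    rw [Fintype.sum_prod_type, Fintype.sum_bool]
    simp only [Fin.consEquiv_apply, List.ofFn_succ, Fin.cons_zero, Fin.cons_succ,
      List.prod_cons]
    norm_num
    rw [← Finset.sum_add_distrib]
    exact Finset.sum_congr rfl fun f _ => by rw [add_mul]

example : (Gen.X' == Gen.P) = false := rfl
example : (Gen.P == Gen.P) = true := rfl

lemma splitOn_P_cons (l : List Gen) :
    (Gen.P :: l).splitOn Gen.P = [] :: l.splitOn Gen.P := by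
  simp [List.splitOn, List.splitOnP_cons, show (Gen.P == Gen.P) = true from rfl]

lemma splitOn_X'_rep (k : ℕ) :
    (List.replicate k Gen.X').splitOn Gen.P = [List.replicate k Gen.X'] := by
  apply List.splitOnP_eq_single
  intro x hx
  simp [List.eq_of_mem_replicate hx, show (Gen.X' == Gen.P) = false from rfl]

lemma splitOn_rep_P (k : ℕ) (l : List Gen) :
    (List.replicate k Gen.X' ++ Gen.P :: l).splitOn Gen.P
      = List.replicate k Gen.X' :: l.splitOn Gen.P := by
  induction k with
  | zero => simpa using splitOn_P_cons l
  | succ k ih =>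
    rw [List.replicate_succ, List.cons_append]
    show List.splitOnP _ _ = _
    rw [List.splitOnP_cons]
    simp only [show ((Gen.X' == Gen.P) = false) from rfl]
    rw [show (List.replicate k Gen.X' ++ Gen.P :: l).splitOnP (· == Gen.P)
        = (List.replicate k Gen.X' ++ Gen.P :: l).splitOn Gen.P from rfl, ih]
    simp [List.replicate_succ]

lemma wordVal_nil (m : ℕ → ℂ) : wordVal m [] = 1 := by
  simp [wordVal, List.splitOn, List.splitOnP_nil]

lemma wordVal_P_cons (m : ℕ → ℂ) (l : List Gen) :
    wordVal m (Gen.P :: l) = wordVal m l := by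
  simp [wordVal, splitOn_P_cons]

lemma wordVal_rep (m : ℕ → ℂ) (k : ℕ) :
    wordVal m (List.replicate k Gen.X') = if k = 0 then 1 else m k := by
  cases k with
  | zero => simpa using wordVal_nil m
  | succ k => simp [wordVal, splitOn_X'_rep]

lemma wordVal_rep_P (m : ℕ → ℂ) (k : ℕ) (l : List Gen) :
    wordVal m (List.replicate k Gen.X' ++ Gen.P :: l)
      = (if k = 0 then 1 else m k) * wordVal m l := by
  cases k with
  | zero => simpa using wordVal_P_cons m l
  | succ k => simp [wordVal, splitOn_rep_P]

/-- `mval m k`: value of a (possibly empty) run of length `k`. -/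
def mval (mm : ℕ → ℂ) (k : ℕ) : ℂ := if k = 0 then 1 else mm k

/-- Run-value of a boolean string with a pending run of letter `c`, length `k`. -/
def Vv (mt mf : ℕ → ℂ) : Bool → ℕ → List Bool → ℂ
  | c, k, [] => mval (bif c then mt else mf) k
  | c, k, b :: s =>
    if b = c then Vv mt mf c (k + 1) s
    else mval (bif c then mt else mf) k * Vv mt mf b 1 s

/-- Left word of a boolean string. -/
def Lw : List Bool → List Gen := List.map (fun b => bif b then Gen.X' else Gen.P)

/-- Right word of a boolean string. -/
def Rw : List Bool → List Gen := List.map (fun b => bif b then Gen.P else Gen.X')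

lemma link (mt mf : ℕ → ℂ) :
    ∀ (s : List Bool) (k : ℕ),
      (wordVal mt (List.replicate k Gen.X' ++ Lw s) * wordVal mf (Rw s)
        = Vv mt mf true k s)
      ∧ (wordVal mt (Lw s) * wordVal mf (List.replicate k Gen.X' ++ Rw s)
        = Vv mt mf false k s) := by
  intro s
  induction s with
  | nil =>
    intro k
    simp [Lw, Rw, wordVal_nil, wordVal_rep, Vv, mval]
  | cons b t ih =>
    intro k
    cases b
    · -- b = false
      constructor
      · -- c = true
        have h1 : Lw (false :: t) = List.replicate k Gen.X' ++ Lw (false :: t)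
            → True := fun _ => trivial
        rw [show Lw (false :: t) = Gen.P :: Lw t from rfl,
          show Rw (false :: t) = Gen.X' :: Rw t from rfl]
        rw [wordVal_rep_P, show Gen.X' :: Rw t = List.replicate 1 Gen.X' ++ Rw t from rfl]
        rw [Vv]
        simp only [show (false = true) = False by simp, if_false]
        rw [← (ih 1).2, mval]
        simp only [Bool.cond_true]
        ring
      · -- c = false
        rw [show Lw (false :: t) = Gen.P :: Lw t from rfl,
          show Rw (false :: t) = Gen.X' :: Rw t from rfl]
        rw [wordVal_P_cons,
          show List.replicate k Gen.X' ++ Gen.X' :: Rw t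
            = List.replicate (k+1) Gen.X' ++ Rw t by
          rw [List.replicate_succ', List.append_assoc]; rfl]
        rw [Vv]
        simp only [if_pos rfl]
        exact (ih (k+1)).2
    · -- b = true
      constructor
      · rw [show Lw (true :: t) = Gen.X' :: Lw t from rfl,
          show Rw (true :: t) = Gen.P :: Rw t from rfl]
        rw [wordVal_P_cons,
          show List.replicate k Gen.X' ++ Gen.X' :: Lw t
            = List.replicate (k+1) Gen.X' ++ Lw t by
          rw [List.replicate_succ', List.append_assoc]; rfl]
        rw [Vv]
        simp only [if_pos rfl]
        exact (ih (k+1)).1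
      · rw [show Lw (true :: t) = Gen.X' :: Lw t from rfl,
          show Rw (true :: t) = Gen.P :: Rw t from rfl]
        rw [wordVal_rep_P, show Gen.X' :: Lw t = List.replicate 1 Gen.X' ++ Lw t from rfl]
        rw [Vv]
        simp only [show (true = false) = False by simp, if_false]
        rw [← (ih 1).1, mval]
        simp only [Bool.cond_false]
        ring

/-- Sum of run-values over all boolean strings of length `n`, with pending run `(c, k)`. -/
noncomputable def SS (mt mf : ℕ → ℂ) (c : Bool) (k n : ℕ) : ℂ :=
  ∑ f : Fin n → Bool, Vv mt mf c k (List.ofFn f)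

lemma SS_zero (mt mf : ℕ → ℂ) (c : Bool) (k : ℕ) :
    SS mt mf c k 0 = mval (bif c then mt else mf) k := by
  simp [SS, Vv]

lemma SS_succ (mt mf : ℕ → ℂ) (c : Bool) (k n : ℕ) :
    SS mt mf c k (n + 1)
      = SS mt mf c (k + 1) n + mval (bif c then mt else mf) k * SS mt mf (!c) 1 n := by
  rw [SS, ← Equiv.sum_comp (Fin.consEquiv (fun _ : Fin (n+1) => Bool))
    (fun f => Vv mt mf c k (List.ofFn f))]
  rw [Fintype.sum_prod_type, Fintype.sum_bool]
  have hl : ∀ (b : Bool) (f : Fin n → Bool),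
      List.ofFn (⇑(Fin.consEquiv fun _ => Bool) (b, f)) = b :: List.ofFn f := by
    intro b f
    rw [List.ofFn_succ]
    simp [Fin.consEquiv]
  cases c
  · simp only [hl, Vv, show (true = false) = False by simp,
      show (false = false) = True by simp, if_true, if_false]
    simp only [SS, Bool.not_false, Bool.not_true, Bool.cond_true, Bool.cond_false]
    rw [Finset.mul_sum]
    exact add_comm _ _
  · simp only [hl, Vv, show (true = true) = True by simp,
      show (false = true) = False by simp, if_true, if_false]
    simp only [SS, Bool.not_false, Bool.not_true, Bool.cond_true, Bool.cond_false]
    rw [Finset.mul_sum]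

lemma SS_closed (mt mf : ℕ → ℂ) (c : Bool) : ∀ (r k : ℕ),
    SS mt mf c k r = mval (bif c then mt else mf) (k + r)
      + ∑ i ∈ Finset.range r,
          mval (bif c then mt else mf) (k + i) * SS mt mf (!c) 1 (r - 1 - i) := by
  intro r
  induction r with
  | zero => intro k; simp [SS_zero]
  | succ r ih =>
    intro k
    rw [SS_succ, ih (k + 1), Finset.sum_range_succ']
    rw [show k + 1 + r = k + (r + 1) by omega, add_assoc]
    congr 1
    congr 1
    · apply Finset.sum_congr rfl
      intro i hi
      rw [show k + 1 + i = k + (i + 1) by omega, show r + 1 - 1 - (i + 1) = r - 1 - i by omega]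

lemma filtConv_pow (mt mf : ℕ → ℂ) (n : ℕ) :
    filtConv (hatL mt) (hatL mf) (FreeAlgebra.ι ℂ Gen.X' ^ n) = SS mt mf true 0 n := by
  have hCop : Cop (FreeAlgebra.ι ℂ Gen.X' ^ n)
      = (FreeAlgebra.ι ℂ Gen.X' ⊗ₜ[ℂ] Pgen + Pgen ⊗ₜ[ℂ] FreeAlgebra.ι ℂ Gen.X') ^ n := by
    rw [map_pow]
    congr 1
    simp [Cop, FreeAlgebra.lift_ι_apply]
  rw [filtConv, LinearMap.comp_apply, AlgHom.toLinearMap_apply, hCop,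
    add_pow_eq_sum_bool, map_sum, SS]
  apply Finset.sum_congr rfl
  intro f _
  have hlist : (List.ofFn fun i => if f i then
        (FreeAlgebra.ι ℂ Gen.X' ⊗ₜ[ℂ] Pgen) else (Pgen ⊗ₜ[ℂ] FreeAlgebra.ι ℂ Gen.X'))
      = (List.ofFn (fun i => if f i then ((FreeAlgebra.ι ℂ Gen.X' : B), Pgen)
          else (Pgen, (FreeAlgebra.ι ℂ Gen.X' : B)))).map (fun p => p.1 ⊗ₜ[ℂ] p.2) := by
    rw [List.map_ofFn]
    congr 1
    funext i
    cases hf : f i <;> simp [hf]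
  rw [hlist, prod_tmul_list, tensorFunc_tmul]
  have hfst : (List.ofFn (fun i => if f i then ((FreeAlgebra.ι ℂ Gen.X' : B), Pgen)
        else (Pgen, (FreeAlgebra.ι ℂ Gen.X' : B)))).map Prod.fst
      = (Lw (List.ofFn f)).map (FreeAlgebra.ι ℂ) := by
    rw [List.map_ofFn, Lw, List.map_ofFn, List.map_ofFn]
    congr 1
    funext i
    cases hf : f i <;> simp [hf, Pgen]
  have hsnd : (List.ofFn (fun i => if f i then ((FreeAlgebra.ι ℂ Gen.X' : B), Pgen)
        else (Pgen, (FreeAlgebra.ι ℂ Gen.X' : B)))).map Prod.snd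
      = (Rw (List.ofFn f)).map (FreeAlgebra.ι ℂ) := by
    rw [List.map_ofFn, Rw, List.map_ofFn, List.map_ofFn]
    congr 1
    funext i
    cases hf : f i <;> simp [hf, Pgen]
  rw [hfst, hsnd, hatL_prod, hatL_prod]
  exact (link mt mf (List.ofFn f) 0).1

lemma G_lemma (mt m u v bm : ℕ → ℂ)
    (hmt0 : mt 0 = 1) (hm0 : m 0 = 1)
    (hms : ∀ n, 1 ≤ n → m n = u n + v n)
    (hA : ∀ n, 1 ≤ n → u n = mt n + ∑ i ∈ Finset.range (n-1), mt (1+i) * v (n-1-i))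
    (hbm : IsBooleanCumulants mt bm) :
    ∀ n, 1 ≤ n → u n = ∑ k ∈ Finset.Icc 1 n, bm k * m (n-k) := by
  have hMrec : ∀ r, 1 ≤ r → mt r + ∑ i ∈ Finset.range r, mt i * v (r-i) = m r := by
    intro r hr
    obtain ⟨r', rfl⟩ : ∃ r', r = r' + 1 := ⟨r - 1, by omega⟩
    rw [Finset.sum_range_succ', hmt0, one_mul]
    have e : ∑ i ∈ Finset.range r', mt (i+1) * v (r'+1-(i+1))
        = ∑ i ∈ Finset.range ((r'+1)-1), mt (1+i) * v ((r'+1)-1-i) := by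
      apply Finset.sum_congr (by norm_num)
      intro i hi
      rw [show i+1 = 1+i by omega, show r'+1-(1+i) = r'+1-1-i by omega]
    rw [e, hms (r'+1) (by omega), hA (r'+1) (by omega)]
    simp only [Nat.sub_zero]
    ring
  intro n hn
  obtain ⟨N, rfl⟩ : ∃ N, n = N + 1 := ⟨n - 1, by omega⟩
  rw [hA (N+1) (by omega), hbm (N+1) (by omega)]
  simp only [Nat.add_sub_cancel]
  have e1 : ∑ i ∈ Finset.range N, mt (1+i) * v (N-i)
      = ∑ j ∈ Finset.Ico 1 (N+1), mt j * v (N+1-j) := by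
    rw [Finset.sum_Ico_eq_sum_range]
    simp only [Nat.add_sub_cancel]
    apply Finset.sum_congr rfl
    intro i hi
    rw [show N+1-(1+i) = N-i by omega]
  have e2 : ∀ j ∈ Finset.Ico 1 (N+1), mt j * v (N+1-j)
      = ∑ k ∈ Finset.Icc 1 j, bm k * mt (j-k) * v (N+1-j) := by
    intro j hj
    rw [Finset.mem_Ico] at hj
    rw [hbm j hj.1, Finset.sum_mul]
  rw [e1, Finset.sum_congr rfl e2]
  have e3 : ∑ j ∈ Finset.Ico 1 (N+1), ∑ k ∈ Finset.Icc 1 j, bm k * mt (j-k) * v (N+1-j)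
      = ∑ k ∈ Finset.Ico 1 (N+1), ∑ j ∈ Finset.Ico k (N+1), bm k * mt (j-k) * v (N+1-j) := by
    rw [Finset.sum_Ico_Ico_comm 1 (N+1) (fun k j => bm k * mt (j-k) * v (N+1-j))]
    apply Finset.sum_congr rfl
    intro j _
    rw [Finset.Ico_add_one_right_eq_Icc]
  rw [e3]
  have e4 : ∑ k ∈ Finset.Icc 1 (N+1), bm k * m (N+1-k)
      = ∑ k ∈ Finset.Ico 1 (N+1), bm k * m (N+1-k) + bm (N+1) * m 0 := by
    rw [← Finset.Ico_add_one_right_eq_Icc, Finset.sum_Ico_succ_top (by omega)]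
    norm_num
  rw [e4, hm0, mul_one]
  have e5 : ∀ k ∈ Finset.Ico 1 (N+1),
      bm k * mt (N+1-k) + ∑ j ∈ Finset.Ico k (N+1), bm k * mt (j-k) * v (N+1-j)
        = bm k * m (N+1-k) := by
    intro k hk
    rw [Finset.mem_Ico] at hk
    have e6 : ∑ j ∈ Finset.Ico k (N+1), bm k * mt (j-k) * v (N+1-j)
        = bm k * ∑ i ∈ Finset.range (N+1-k), mt i * v (N+1-k-i) := by
      rw [Finset.sum_Ico_eq_sum_range, Finset.mul_sum]
      apply Finset.sum_congr rfl
      intro i hi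
      rw [Finset.mem_range] at hi
      rw [show k+i-k = i by omega, show N+1-(k+i) = N+1-k-i by omega]
      ring
    rw [e6, ← mul_add, hMrec (N+1-k) (by omega)]
  have e7 : bm (N+1) * mt (N+1-(N+1)) + ∑ j ∈ Finset.Ico (N+1) (N+1), bm (N+1) * mt (j-(N+1)) * v (N+1-j)
      = bm (N+1) := by
    simp [hmt0]
  calc ∑ k ∈ Finset.Icc 1 (N+1), bm k * mt (N+1-k)
        + ∑ k ∈ Finset.Ico 1 (N+1), ∑ j ∈ Finset.Ico k (N+1), bm k * mt (j-k) * v (N+1-j)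
      = (∑ k ∈ Finset.Ico 1 (N+1), bm k * mt (N+1-k) + bm (N+1) * mt (N+1-(N+1)))
        + ∑ k ∈ Finset.Ico 1 (N+1), ∑ j ∈ Finset.Ico k (N+1), bm k * mt (j-k) * v (N+1-j) := by
        rw [← Finset.Ico_add_one_right_eq_Icc, Finset.sum_Ico_succ_top (by omega)]
    _ = (∑ k ∈ Finset.Ico 1 (N+1), (bm k * mt (N+1-k)
          + ∑ j ∈ Finset.Ico k (N+1), bm k * mt (j-k) * v (N+1-j))) + bm (N+1) * mt (N+1-(N+1)) := by
        rw [Finset.sum_add_distrib]; ring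
    _ = (∑ k ∈ Finset.Ico 1 (N+1), bm k * m (N+1-k)) + bm (N+1) := by
        rw [Finset.sum_congr rfl e5]
        simp [hmt0]

lemma mom_zero (μ : MeasureTheory.Measure ℝ) [MeasureTheory.IsProbabilityMeasure μ] :
    mom μ 0 = 1 := by
  simp [mom]

/-- the moments of the filtered convolution restricted to powers of `X'`
are the moments of the boolean convolution `μ ⊎ ν`: the boolean cumulants add. -/
theorem filtConv_boolean (μ ν : MeasureTheory.Measure ℝ)
    [MeasureTheory.IsProbabilityMeasure μ] [MeasureTheory.IsProbabilityMeasure ν]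
    (hμ : ∀ n : ℕ, MeasureTheory.Integrable (fun x => x ^ n) μ)
    (hν : ∀ n : ℕ, MeasureTheory.Integrable (fun x => x ^ n) ν)
    (m b bμ bν : ℕ → ℂ)
    (hm : ∀ n : ℕ, m n = filtConv (hatL (mom μ)) (hatL (mom ν)) (FreeAlgebra.ι ℂ Gen.X' ^ n))
    (hb : IsBooleanCumulants m b)
    (hbμ : IsBooleanCumulants (mom μ) bμ)
    (hbν : IsBooleanCumulants (mom ν) bν)
    (n : ℕ) (hn : 1 ≤ n) :
    b n = bμ n + bν n := by
  set mt := mom μ with hmt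
  set mf := mom ν with hmf
  have hmt0 : mt 0 = 1 := mom_zero μ
  have hmf0 : mf 0 = 1 := mom_zero ν
  have hmSS : ∀ n, m n = SS mt mf true 0 n := fun n => (hm n).trans (filtConv_pow mt mf n)
  have hm0 : m 0 = 1 := by rw [hmSS 0, SS_zero]; simp [mval]
  set u : ℕ → ℂ := fun n => SS mt mf true 1 (n - 1) with hu
  set v : ℕ → ℂ := fun n => SS mt mf false 1 (n - 1) with hv
  have hms : ∀ n, 1 ≤ n → m n = u n + v n := by
    intro n hn
    obtain ⟨N, rfl⟩ : ∃ N, n = N + 1 := ⟨n - 1, by omega⟩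
    rw [hmSS (N+1), SS_succ]
    simp [hu, hv, mval]
  have hA : ∀ n, 1 ≤ n → u n = mt n + ∑ i ∈ Finset.range (n-1), mt (1+i) * v (n-1-i) := by
    intro n hn
    obtain ⟨N, rfl⟩ : ∃ N, n = N + 1 := ⟨n - 1, by omega⟩
    show SS mt mf true 1 (N+1-1) = _
    rw [Nat.add_sub_cancel, SS_closed]
    congr 1
    · simp [mval, show 1 + N = N + 1 by omega]
    · apply Finset.sum_congr (by norm_num)
      intro i hi
      rw [Finset.mem_range] at hi
      congr 1
      · simp [mval]
      · show SS mt mf (!true) 1 (N - 1 - i) = SS mt mf false 1 (N+1-1-i-1)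
        congr 1
        omega
  have hB : ∀ n, 1 ≤ n → v n = mf n + ∑ i ∈ Finset.range (n-1), mf (1+i) * u (n-1-i) := by
    intro n hn
    obtain ⟨N, rfl⟩ : ∃ N, n = N + 1 := ⟨n - 1, by omega⟩
    show SS mt mf false 1 (N+1-1) = _
    rw [Nat.add_sub_cancel, SS_closed]
    congr 1
    · simp [mval, show 1 + N = N + 1 by omega]
    · apply Finset.sum_congr (by norm_num)
      intro i hi
      rw [Finset.mem_range] at hi
      congr 1
      · simp [mval]
      · show SS mt mf (!false) 1 (N - 1 - i) = SS mt mf true 1 (N+1-1-i-1)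
        congr 1
        omega
  have hG := G_lemma mt m u v bμ hmt0 hm0 hms hA hbμ
  have hH := G_lemma mf m v u bν hmf0 hm0
    (fun n hn => (hms n hn).trans (add_comm _ _)) hB hbν
  have hkey : ∀ n, 1 ≤ n → m n = ∑ k ∈ Finset.Icc 1 n, (bμ k + bν k) * m (n-k) := by
    intro n hn
    rw [hms n hn, hG n hn, hH n hn, ← Finset.sum_add_distrib]
    apply Finset.sum_congr rfl
    intro k _
    ring
  clear hm hmSS hA hB hG hH hms hμ hν
  induction n using Nat.strong_induction_on with
  | _ n ih =>
    obtain ⟨N, rfl⟩ : ∃ N, n = N + 1 := ⟨n - 1, by omega⟩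
    have l1 : ∀ (c : ℕ → ℂ), ∑ k ∈ Finset.Icc 1 (N+1), c k * m (N+1-k)
        = ∑ k ∈ Finset.Ico 1 (N+1), c k * m (N+1-k) + c (N+1) * m 0 := by
      intro c
      rw [← Finset.Ico_add_one_right_eq_Icc, Finset.sum_Ico_succ_top (by omega)]
      norm_num
    have h1 : ∑ k ∈ Finset.Ico 1 (N+1), (bμ k + bν k) * m (N+1-k)
          + (bμ (N+1) + bν (N+1)) * m 0
        = ∑ k ∈ Finset.Ico 1 (N+1), b k * m (N+1-k) + b (N+1) * m 0 := by
      rw [← l1 (fun k => bμ k + bν k), ← l1 b, ← hkey (N+1) (by omega),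
        ← hb (N+1) (by omega)]
    have h2 : ∑ k ∈ Finset.Ico 1 (N+1), (bμ k + bν k) * m (N+1-k)
        = ∑ k ∈ Finset.Ico 1 (N+1), b k * m (N+1-k) := by
      apply Finset.sum_congr rfl
      intro k hk
      rw [Finset.mem_Ico] at hk
      rw [ih k hk.2 hk.1]
    rw [h2] at h1
    have h3 := add_left_cancel h1
    rw [hm0, mul_one, mul_one] at h3
    exact h3.symm
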